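/- Let G = (V,E) be a finite hypergraph with demands d : E → ℝ≥0 and supplies s : V → ℝ≥0, let B ⊆ A ⊆ V, and suppose B is self-contained (B can fully serve all edges in E[B] within the supplies of B). Let h : E[A] × A → ℝ≥0 be an assignment with ∑_{v∈e∩A} h(e,v) ≤ d(e) for all e ∈ E[A] and ∑_{e∋v} h(e,v) ≤ s(v) for all v ∈ A, which maximizes the total assigned amount ∑_{e,v} h(e,v) among all such assignments. Then h saturates every edge of E[B], i.e., ∑_{v∈e∩A} h(e,v) = d(e) for every e ∈ E[B]. -/
import Mathlib


/-- `B` is self-contained: the supplies of `B` can fully serve the demands of all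
edges incident to `B`. -/
def SelfContained {V : Type*} [DecidableEq V] (E : Finset (Finset V))
    (d : Finset V → ℝ) (s : V → ℝ) (B : Finset V) : Prop :=
  ∃ h : Finset V → V → ℝ,
    (∀ e v, 0 ≤ h e v) ∧
    (∀ e ∈ E.filter (fun e => (e ∩ B).Nonempty), ∑ v ∈ e ∩ B, h e v = d e) ∧
    (∀ v ∈ B, ∑ e ∈ E.filter (fun e => (e ∩ B).Nonempty ∧ v ∈ e), h e v ≤ s v)

theorem stmt_13 {V : Type*} [Fintype V] [DecidableEq V]
    (E : Finset (Finset V)) (hE : ∀ e ∈ E, e.Nonempty)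
    (d : Finset V → ℝ) (hd : ∀ e ∈ E, 0 ≤ d e)
    (s : V → ℝ) (hs : ∀ v, 0 ≤ s v)
    (A B : Finset V) (hBA : B ⊆ A)
    (hB : SelfContained E d s B)
    (h : Finset V → V → ℝ)
    (hpos : ∀ e v, 0 ≤ h e v)
    (hdem : ∀ e ∈ E.filter (fun e => (e ∩ A).Nonempty), ∑ v ∈ e ∩ A, h e v ≤ d e)
    (hsup : ∀ v ∈ A, ∑ e ∈ E.filter (fun e => (e ∩ A).Nonempty ∧ v ∈ e), h e v ≤ s v)
    (hmax : ∀ h' : Finset V → V → ℝ,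
      (∀ e v, 0 ≤ h' e v) →
      (∀ e ∈ E.filter (fun e => (e ∩ A).Nonempty), ∑ v ∈ e ∩ A, h' e v ≤ d e) →
      (∀ v ∈ A, ∑ e ∈ E.filter (fun e => (e ∩ A).Nonempty ∧ v ∈ e), h' e v ≤ s v) →
      ∑ e ∈ E.filter (fun e => (e ∩ A).Nonempty), ∑ v ∈ e ∩ A, h' e v ≤
        ∑ e ∈ E.filter (fun e => (e ∩ A).Nonempty), ∑ v ∈ e ∩ A, h e v) :
    ∀ e ∈ E.filter (fun e => (e ∩ B).Nonempty), ∑ v ∈ e ∩ A, h e v = d e := by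
  classical
  obtain ⟨g, hg0, hgdem, hgsup⟩ := hB
  -- every edge meeting B meets A
  have hsub : ∀ e : Finset V, (e ∩ B).Nonempty → (e ∩ A).Nonempty := by
    intro e ⟨v, hv⟩
    exact ⟨v, Finset.mem_inter.mpr ⟨(Finset.mem_inter.mp hv).1,
      hBA (Finset.mem_inter.mp hv).2⟩⟩
  set h' : Finset V → V → ℝ := fun e v =>
    if (e ∩ B).Nonempty then (if v ∈ B then g e v else 0) else h e v with hh'
  have h'pos : ∀ e v, 0 ≤ h' e v := by
    intro e v
    simp only [hh']
    split_ifs <;> first | exact hg0 e v | exact le_refl 0 | exact hpos e v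
  -- demand sum of h' on an edge meeting B
  have hdemB : ∀ e ∈ E, (e ∩ B).Nonempty → ∑ v ∈ e ∩ A, h' e v = d e := by
    intro e he heB
    have : ∑ v ∈ e ∩ A, h' e v = ∑ v ∈ e ∩ B, g e v := by
      rw [← Finset.sum_filter_add_sum_filter_not (e ∩ A) (fun v => v ∈ B)]
      have h1 : (e ∩ A).filter (fun v => v ∈ B) = e ∩ B := by
        ext v
        simp only [Finset.mem_filter, Finset.mem_inter]
        exact ⟨fun ⟨⟨hv, _⟩, hvB⟩ => ⟨hv, hvB⟩, fun ⟨hv, hvB⟩ => ⟨⟨hv, hBA hvB⟩, hvB⟩⟩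
      have h2 : ∀ v ∈ (e ∩ A).filter (fun v => ¬ v ∈ B), h' e v = 0 := by
        intro v hv
        simp only [Finset.mem_filter] at hv
        simp [hh', heB, hv.2]
      rw [Finset.sum_eq_zero h2, add_zero, h1]
      refine Finset.sum_congr rfl fun v hv => ?_
      simp [hh', heB, (Finset.mem_inter.mp hv).2]
    rw [this]
    exact hgdem e (Finset.mem_filter.mpr ⟨he, heB⟩)
  have h'dem : ∀ e ∈ E.filter (fun e => (e ∩ A).Nonempty),
      ∑ v ∈ e ∩ A, h' e v ≤ d e := by
    intro e he
    rw [Finset.mem_filter] at he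
    by_cases heB : (e ∩ B).Nonempty
    · exact le_of_eq (hdemB e he.1 heB)
    · have : ∑ v ∈ e ∩ A, h' e v = ∑ v ∈ e ∩ A, h e v := by
        refine Finset.sum_congr rfl fun v hv => ?_
        simp [hh', heB]
      rw [this]
      exact hdem e (Finset.mem_filter.mpr he)
  have h'sup : ∀ v ∈ A, ∑ e ∈ E.filter (fun e => (e ∩ A).Nonempty ∧ v ∈ e),
      h' e v ≤ s v := by
    intro v hv
    by_cases hvB : v ∈ B
    · have hset : E.filter (fun e => (e ∩ A).Nonempty ∧ v ∈ e)
          = E.filter (fun e => (e ∩ B).Nonempty ∧ v ∈ e) := by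
        ext e
        simp only [Finset.mem_filter]
        constructor
        · rintro ⟨he, _, hve⟩
          exact ⟨he, ⟨v, Finset.mem_inter.mpr ⟨hve, hvB⟩⟩, hve⟩
        · rintro ⟨he, heB, hve⟩
          exact ⟨he, hsub e heB, hve⟩
      rw [hset]
      calc ∑ e ∈ E.filter (fun e => (e ∩ B).Nonempty ∧ v ∈ e), h' e v
          = ∑ e ∈ E.filter (fun e => (e ∩ B).Nonempty ∧ v ∈ e), g e v := by
            refine Finset.sum_congr rfl fun e he => ?_
            rw [Finset.mem_filter] at he
            simp [hh', he.2.1, hvB]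
        _ ≤ s v := hgsup v hvB
    · calc ∑ e ∈ E.filter (fun e => (e ∩ A).Nonempty ∧ v ∈ e), h' e v
          ≤ ∑ e ∈ E.filter (fun e => (e ∩ A).Nonempty ∧ v ∈ e), h e v := by
            refine Finset.sum_le_sum fun e he => ?_
            simp only [hh']
            split_ifs with h1
            · exact hpos e v
            · exact le_refl _
        _ ≤ s v := hsup v hv
  have hkey := hmax h' h'pos h'dem h'sup
  -- split both sums over edges meeting B / not meeting B
  set EA := E.filter (fun e => (e ∩ A).Nonempty) with hEA
  have hsplit : ∀ f : Finset V → ℝ,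
      ∑ e ∈ EA, f e = ∑ e ∈ EA.filter (fun e => (e ∩ B).Nonempty), f e
        + ∑ e ∈ EA.filter (fun e => ¬ (e ∩ B).Nonempty), f e := by
    intro f
    exact (Finset.sum_filter_add_sum_filter_not EA _ f).symm
  have heq2 : ∑ e ∈ EA.filter (fun e => ¬ (e ∩ B).Nonempty), ∑ v ∈ e ∩ A, h' e v
      = ∑ e ∈ EA.filter (fun e => ¬ (e ∩ B).Nonempty), ∑ v ∈ e ∩ A, h e v := by
    refine Finset.sum_congr rfl fun e he => ?_
    rw [Finset.mem_filter] at he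
    refine Finset.sum_congr rfl fun v hv => ?_
    simp [hh', he.2]
  rw [hsplit (fun e => ∑ v ∈ e ∩ A, h' e v), hsplit (fun e => ∑ v ∈ e ∩ A, h e v),
    heq2, add_le_add_iff_right] at hkey
  have hEB : EA.filter (fun e => (e ∩ B).Nonempty)
      = E.filter (fun e => (e ∩ B).Nonempty) := by
    ext e
    simp only [hEA, Finset.mem_filter, and_assoc]
    constructor
    · rintro ⟨he, _, heB⟩; exact ⟨he, heB⟩
    · rintro ⟨he, heB⟩; exact ⟨he, hsub e heB, heB⟩
  have hkey2 : ∑ e ∈ E.filter (fun e => (e ∩ B).Nonempty), d e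
      ≤ ∑ e ∈ E.filter (fun e => (e ∩ B).Nonempty), ∑ v ∈ e ∩ A, h e v := by
    rw [← hEB]
    refine le_trans (le_of_eq ?_) hkey
    refine (Finset.sum_congr rfl fun e he => ?_).symm
    rw [hEB, Finset.mem_filter] at he
    exact hdemB e he.1 he.2
  intro e0 he0
  rw [Finset.mem_filter] at he0
  by_contra hne
  have hlt : ∑ v ∈ e0 ∩ A, h e0 v < d e0 :=
    lt_of_le_of_ne (hdem e0 (Finset.mem_filter.mpr ⟨he0.1, hsub e0 he0.2⟩)) hne
  have : ∑ e ∈ E.filter (fun e => (e ∩ B).Nonempty), ∑ v ∈ e ∩ A, h e v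
      < ∑ e ∈ E.filter (fun e => (e ∩ B).Nonempty), d e := by
    refine Finset.sum_lt_sum (fun e he => ?_) ⟨e0, Finset.mem_filter.mpr he0, hlt⟩
    rw [Finset.mem_filter] at he
    exact hdem e (Finset.mem_filter.mpr ⟨he.1, hsub e he.2⟩)
  linarith
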